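/- Let A = C(S¹, ℂ) be the C*-algebra of continuous complex-valued functions on the unit circle S¹ = {z ∈ ℂ : |z| = 1} and define E : A → A by (E f)(z) = (f(z) + f(z̄))/2, where z̄ is the complex conjugate of z. Then E is a conditional expectation on A, the map 2·E − id_A is completely positive, and yet E admits no finite quasi-basis: there do not exist n ∈ ℕ and u₁, …, u_n ∈ A with f = Σ_{i=1}^{n} u_i · E(u_i* · f) for every f ∈ A. -/

import Mathlib

open scoped ComplexOrder

noncomputable section

/-- `z̄` lies on the unit circle whenever `z` does. -/
lemma star_mem_sphere (z : Metric.sphere (0 : ℂ) 1) :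
    star (z : ℂ) ∈ Metric.sphere (0 : ℂ) 1 := by
  have hz : ‖(z : ℂ)‖ = 1 := by
    have h := z.2
    simp only [Metric.mem_sphere, dist_zero_right] at h
    exact h
  simp only [Metric.mem_sphere, dist_zero_right, norm_star]
  exact hz

/-- Complex conjugation as a self-map of the unit circle. -/
def conjCircle : C(Metric.sphere (0 : ℂ) 1, Metric.sphere (0 : ℂ) 1) :=
  ⟨fun z => ⟨star (z : ℂ), star_mem_sphere z⟩,
    (continuous_star.comp continuous_subtype_val).subtype_mk fun z => star_mem_sphere z⟩

/-- The conditional expectation `(E f)(z) = (f(z) + f(z̄))/2` on `C(S¹, ℂ)`. -/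
def Econj : C(Metric.sphere (0 : ℂ) 1, ℂ) → C(Metric.sphere (0 : ℂ) 1, ℂ) :=
  fun f => (2⁻¹ : ℂ) • (f + f.comp conjCircle)

variable {A : Type*} [CStarAlgebra A] [PartialOrder A] [StarOrderedRing A]

/-- A conditional expectation on a unital C*-algebra `A`: a linear, idempotent, unital,
positive, contractive (norm-one, since `E 1 = 1`) map whose range is a C*-subalgebra
`B = E(A)` (closed under multiplication and star) and which is a `B`-bimodule map. -/
structure IsCondExp (E : A → A) : Prop where
  map_add : ∀ a b : A, E (a + b) = E a + E b
  map_smul : ∀ (c : ℂ) (a : A), E (c • a) = c • E a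
  idem : ∀ a : A, E (E a) = E a
  map_one : E 1 = 1
  pos : ∀ a : A, 0 ≤ a → 0 ≤ E a
  contractive : ∀ a : A, ‖E a‖ ≤ ‖a‖
  range_mul : ∀ a b : A, E (E a * E b) = E a * E b
  range_star : ∀ a : A, E (star (E a)) = star (E a)
  bimod : ∀ a b c : A, E (E b * a * E c) = E b * E a * E c

/-- A map `Φ` on a (C*-)algebra `R` is completely positive if for every `n ≥ 1` its entrywise
application to `n × n` matrices over `R` maps positive elements (i.e. elements of the form
`star B * B`, which are exactly the positive elements of the C*-algebra of matrices over a
C*-algebra) to positive elements. -/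
def IsCompletelyPositive {R : Type*} [Ring R] [StarRing R] (Φ : R → R) : Prop :=
  ∀ (n : ℕ) (M : Matrix (Fin n) (Fin n) R),
    (∃ B : Matrix (Fin n) (Fin n) R, M = star B * B) →
    ∃ C : Matrix (Fin n) (Fin n) R, M.map Φ = star C * C


lemma conjCircle_conjCircle (z : Metric.sphere (0:ℂ) 1) : conjCircle (conjCircle z) = z := by
  simp [conjCircle]

lemma Econj_apply (f : C(Metric.sphere (0:ℂ) 1, ℂ)) (z) :
    Econj f z = 2⁻¹ * (f z + f (conjCircle z)) := by
  simp [Econj]; ring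

lemma Econj_conj (f : C(Metric.sphere (0:ℂ) 1, ℂ)) (z) :
    Econj f (conjCircle z) = Econj f z := by
  simp [Econj_apply, conjCircle_conjCircle]; ring

lemma half_nonneg : (0:ℂ) ≤ 2⁻¹ := by
  rw [Complex.le_def]; norm_num

lemma econj_cond :
    (∀ a b : C(Metric.sphere (0:ℂ) 1, ℂ), Econj (a+b) = Econj a + Econj b) ∧
    (∀ (c : ℂ) a, Econj (c • a) = c • Econj a) ∧
    (∀ a, Econj (Econj a) = Econj a) ∧
    (Econj 1 = 1) ∧
    (∀ a, 0 ≤ a → 0 ≤ Econj a) ∧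
    (∀ a, ‖Econj a‖ ≤ ‖a‖) ∧
    (∀ a b, Econj (Econj a * Econj b) = Econj a * Econj b) ∧
    (∀ a, Econj (star (Econj a)) = star (Econj a)) ∧
    (∀ a b c, Econj (Econj b * a * Econj c) = Econj b * Econj a * Econj c) := by
  refine ⟨?_, ?_, ?_, ?_, ?_, ?_, ?_, ?_, ?_⟩
  · intro a b; ext z; simp [Econj_apply]; ring
  · intro c a; ext z; simp [Econj_apply]; ring
  · intro a; ext z; simp [Econj_apply, Econj_conj, conjCircle_conjCircle]; ring
  · ext z; simp [Econj_apply]; ring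
  · intro a ha; rw [ContinuousMap.le_def] at ha ⊢
    intro z
    simp only [ContinuousMap.zero_apply, Econj_apply] at *
    exact mul_nonneg half_nonneg (add_nonneg (ha z) (ha _))
  · intro a
    refine (ContinuousMap.norm_le _ (norm_nonneg a)).2 fun z => ?_
    rw [Econj_apply]
    calc ‖(2⁻¹:ℂ) * (a z + a (conjCircle z))‖ ≤ 2⁻¹ * (‖a z‖ + ‖a (conjCircle z)‖) := by
          rw [norm_mul]; gcongr <;> first | (apply norm_add_le) | norm_num
      _ ≤ 2⁻¹ * (‖a‖ + ‖a‖) := by gcongr <;> exact ContinuousMap.norm_coe_le_norm _ _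
      _ = ‖a‖ := by ring
  · intro a b; ext z
    simp [Econj_apply, Econj_conj, conjCircle_conjCircle]; ring
  · intro a; ext z
    simp [Econj_apply, Econj_conj, conjCircle_conjCircle]; ring
  · intro a b c; ext z
    simp [Econj_apply, Econj_conj, conjCircle_conjCircle]; ring

lemma two_E_sub (f : C(Metric.sphere (0:ℂ) 1, ℂ)) :
    (2 : ℝ) • Econj f - f = f.comp conjCircle := by
  ext z
  simp [Econj_apply, Complex.real_smul]; try ring

lemma econj_CP :
    ∀ (n : ℕ) (M : Matrix (Fin n) (Fin n) C(Metric.sphere (0:ℂ) 1, ℂ)),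
    (∃ B : Matrix (Fin n) (Fin n) C(Metric.sphere (0:ℂ) 1, ℂ), M = star B * B) →
    ∃ C : Matrix (Fin n) (Fin n) C(Metric.sphere (0:ℂ) 1, ℂ), M.map (fun f => (2 : ℝ) • Econj f - f) = star C * C := by
  intro n M ⟨B, hB⟩
  refine ⟨B.map (fun f => f.comp conjCircle), ?_⟩
  ext i j z
  simp only [Matrix.map_apply, Matrix.mul_apply, Matrix.star_apply, hB, two_E_sub,
    ContinuousMap.sum_apply, ContinuousMap.comp_apply, ContinuousMap.mul_apply,
    ContinuousMap.star_apply]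

lemma coe_conjCircle (z : Metric.sphere (0:ℂ) 1) : ((conjCircle z : Metric.sphere (0:ℂ) 1) : ℂ) = star (z:ℂ) := rfl

lemma no_qb : ¬ ∃ (n : ℕ) (u : Fin n → C(Metric.sphere (0 : ℂ) 1, ℂ)),
        ∀ f : C(Metric.sphere (0 : ℂ) 1, ℂ),
          f = ∑ i, u i * Econj (star (u i) * f) := by
  rintro ⟨n, u, hu⟩
  set g : C(Metric.sphere (0:ℂ) 1, ℂ) := ∑ i, star (u i) * u i with hg
  have key : ∀ (f : C(Metric.sphere (0:ℂ) 1, ℂ)) z, f z =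
      ∑ i, u i z * (2⁻¹ * ((starRingEnd ℂ) (u i z) * f z +
        (starRingEnd ℂ) (u i (conjCircle z)) * f (conjCircle z))) := by
    intro f z
    conv_lhs => rw [hu f]
    simp [ContinuousMap.sum_apply, Econj_apply]
  have hgz : ∀ z, g z = ∑ i, (starRingEnd ℂ) (u i z) * u i z := by
    intro z; simp [hg, ContinuousMap.sum_apply]
  have one_mem : (1:ℂ) ∈ Metric.sphere (0:ℂ) 1 := by simp
  set o : Metric.sphere (0:ℂ) 1 := ⟨1, one_mem⟩ with ho'
  have ho : conjCircle o = o := by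
    apply Subtype.ext; simp [coe_conjCircle, ho']
  have hg1 : g o = 1 := by
    have h := key 1 o
    rw [ho] at h
    simp only [ContinuousMap.one_apply, mul_one] at h
    rw [hgz]
    calc ∑ i, (starRingEnd ℂ) (u i o) * u i o
        = ∑ i, u i o * (2⁻¹ * ((starRingEnd ℂ) (u i o) + (starRingEnd ℂ) (u i o))) := by
          apply Finset.sum_congr rfl; intros; ring
      _ = 1 := h.symm
  have hg2 : ∀ z : Metric.sphere (0:ℂ) 1, (z:ℂ) ≠ star (z:ℂ) → g z = 2 := by
    intro z hz
    have hd : (z:ℂ) - star (z:ℂ) ≠ 0 := sub_ne_zero.mpr hz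
    set f : C(Metric.sphere (0:ℂ) 1, ℂ) :=
      ⟨fun w => ((w:ℂ) - star (z:ℂ)) / ((z:ℂ) - star (z:ℂ)),
        (continuous_subtype_val.sub continuous_const).div_const _⟩ with hf
    have hfz : f z = 1 := div_self hd
    have hfz' : f (conjCircle z) = 0 := by
      simp [hf, coe_conjCircle]
    have h := key f z
    rw [hfz, hfz'] at h
    simp only [mul_one, mul_zero, add_zero] at h
    rw [hgz]
    calc ∑ i, (starRingEnd ℂ) (u i z) * u i z
        = 2 * ∑ i, u i z * (2⁻¹ * ((starRingEnd ℂ) (u i z))) := by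
          rw [Finset.mul_sum]; apply Finset.sum_congr rfl; intros; ring
      _ = 2 := by rw [← h]; ring
  -- sequence tending to o through non-fixed points
  have mem_sph : ∀ k : ℕ, Complex.exp ((1/(k+1):ℝ) * Complex.I) ∈ Metric.sphere (0:ℂ) 1 := by
    intro k
    simp only [Metric.mem_sphere, dist_zero_right,
      Complex.norm_exp_ofReal_mul_I]
  set zs : ℕ → Metric.sphere (0:ℂ) 1 := fun k => ⟨_, mem_sph k⟩ with hzs
  have hne : ∀ k, ((zs k : ℂ)) ≠ star ((zs k : ℂ)) := by
    intro k h
    have him := congrArg Complex.im h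
    rw [Complex.star_def, Complex.conj_im] at him
    have h0 : (Complex.exp ((1/(k+1):ℝ) * Complex.I)).im = 0 := by
      have : ((zs k : ℂ)).im = 0 := by linarith
      simpa [hzs] using this
    rw [Complex.exp_ofReal_mul_I_im] at h0
    have hp : (0:ℝ) < 1/(k+1) := by positivity
    have hlt : (1/(k+1):ℝ) < Real.pi := by
      have h1 : (1/(k+1):ℝ) ≤ 1 := by
        rw [div_le_one (by positivity)]
        have : (1:ℝ) ≤ (k:ℝ) + 1 := by
          have := Nat.cast_nonneg (α := ℝ) k; linarith
        linarith
      have := Real.pi_gt_three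
      linarith
    exact (Real.sin_pos_of_pos_of_lt_pi hp hlt).ne' h0
  have htend : Filter.Tendsto zs Filter.atTop (nhds o) := by
    rw [tendsto_subtype_rng]
    have h1 : Filter.Tendsto (fun k : ℕ => (1/(k+1):ℝ)) Filter.atTop (nhds 0) :=
      tendsto_one_div_add_atTop_nhds_zero_nat
    have hc : Continuous fun t : ℝ => Complex.exp ((t:ℂ) * Complex.I) :=
      (Complex.continuous_ofReal.mul continuous_const).cexp
    have h2 := (hc.tendsto 0).comp h1
    simp only [Function.comp_def] at h2
    rw [show ((o:ℂ)) = Complex.exp (((0:ℝ):ℂ) * Complex.I) by simp [ho']]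
    exact h2
  have hlim : Filter.Tendsto (fun k => g (zs k)) Filter.atTop (nhds (g o)) :=
    (g.continuous.tendsto o).comp htend
  have hconst : (fun k => g (zs k)) = fun _ => (2:ℂ) := by
    funext k; exact hg2 (zs k) (hne k)
  rw [hconst] at hlim
  have : g o = 2 := (tendsto_nhds_unique tendsto_const_nhds hlim).symm
  rw [hg1] at this
  norm_num at this

theorem Econj_isCondExp_CP_and_no_finite_quasi_basis :
    IsCondExp Econj ∧
    IsCompletelyPositive
      (fun f : C(Metric.sphere (0 : ℂ) 1, ℂ) => (2 : ℝ) • Econj f - f) ∧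
    ¬ ∃ (n : ℕ) (u : Fin n → C(Metric.sphere (0 : ℂ) 1, ℂ)),
        ∀ f : C(Metric.sphere (0 : ℂ) 1, ℂ),
          f = ∑ i, u i * Econj (star (u i) * f) := by
  refine ⟨?_, ?_, no_qb⟩
  · obtain ⟨h1, h2, h3, h4, h5, h6, h7, h8, h9⟩ := econj_cond
    exact ⟨h1, h2, h3, h4, h5, h6, h7, h8, h9⟩
  · intro n M h
    exact econj_CP n M h

end
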